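/- arXiv:1102.4868 — 3 statements merged into one kernel-verified Lean document; each statement's English description precedes it below -/
import Mathlib

section
/- Define ω_◇(Q,s) = min{ ‖Qz‖_◇ / ‖z‖_∞ : z ≠ 0, ‖z‖₁/‖z‖_∞ ≤ s }. If x is k-sparse, ‖w‖₂ ≤ ε, and x̂ solves Basis Pursuit (minimizing ‖z‖₁ subject to ‖y − Az‖₂ ≤ ε with y = Ax + w), then ‖x̂ − x‖_∞ ≤ 2ε/ω₂(A,2k), provided ω₂(A,2k) > 0. -/
open Finset Matrix

/-- ℓ₁ norm of a vector. -/
noncomputable def l1 {n : ℕ} (x : Fin n → ℝ) : ℝ := ∑ i, |x i|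

/-- ℓ∞ (sup) norm of a vector. -/
noncomputable def linf {n : ℕ} (x : Fin n → ℝ) : ℝ := ⨆ i, |x i|

/-- ℓ₂ (Euclidean) norm of a vector. -/
noncomputable def l2 {n : ℕ} (x : Fin n → ℝ) : ℝ := Real.sqrt (∑ i, (x i) ^ 2)

/-- ω₂(A,s) = inf{ ‖Az‖₂/‖z‖_∞ : z ≠ 0, ‖z‖₁ ≤ s‖z‖_∞ }. -/
noncomputable def omega2 {m n : ℕ} (A : Matrix (Fin m) (Fin n) ℝ) (s : ℝ) : ℝ :=
  sInf {r | ∃ z : Fin n → ℝ, z ≠ 0 ∧ l1 z ≤ s * linf z ∧ r = l2 (A.mulVec z) / linf z}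

lemma l2_nonneg {n : ℕ} (x : Fin n → ℝ) : 0 ≤ l2 x := Real.sqrt_nonneg _

lemma l2_eq_norm {n : ℕ} (x : Fin n → ℝ) :
    l2 x = ‖(WithLp.equiv 2 (Fin n → ℝ)).symm x‖ := by
  rw [EuclideanSpace.norm_eq]
  simp [l2, Real.norm_eq_abs, sq_abs]

lemma l2_sub_le {n : ℕ} (a b : Fin n → ℝ) : l2 (a - b) ≤ l2 a + l2 b := by
  simp only [l2_eq_norm]
  have : (WithLp.equiv 2 (Fin n → ℝ)).symm (a - b)
      = (WithLp.equiv 2 (Fin n → ℝ)).symm a - (WithLp.equiv 2 (Fin n → ℝ)).symm b := rfl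
  rw [this]
  exact norm_sub_le _ _

lemma abs_le_linf {n : ℕ} (x : Fin n → ℝ) (i : Fin n) : |x i| ≤ linf x := by
  rw [linf]
  exact le_ciSup (Set.Finite.bddAbove (Set.finite_range (fun j => |x j|))) i

theorem stmt10 {m n : ℕ} (A : Matrix (Fin m) (Fin n) ℝ) (k : ℕ)
    (x xhat : Fin n → ℝ) (w y : Fin m → ℝ) (ε : ℝ)
    (hx : (Finset.univ.filter fun i => x i ≠ 0).card ≤ k)
    (hy : y = A.mulVec x + w) (hw : l2 w ≤ ε)
    (hfeas : l2 (y - A.mulVec xhat) ≤ ε)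
    (hopt : ∀ z : Fin n → ℝ, l2 (y - A.mulVec z) ≤ ε → l1 xhat ≤ l1 z)
    (hω : 0 < omega2 A (2 * k)) :
    linf (fun i => xhat i - x i) ≤ 2 * ε / omega2 A (2 * k) := by
  have hε : 0 ≤ ε := le_trans (l2_nonneg w) hw
  set h : Fin n → ℝ := fun i => xhat i - x i with hh
  by_cases hz : h = 0
  · rw [hz]
    have : linf (0 : Fin n → ℝ) = 0 := by
      simp only [linf, Pi.zero_apply, abs_zero]
      exact Real.iSup_const_zero
    rw [this]
    positivity
  -- cone condition
  obtain ⟨i0, hi0⟩ := Function.ne_iff.mp hz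
  have hlinfpos : 0 < linf h := lt_of_lt_of_le (abs_pos.mpr hi0) (abs_le_linf h i0)
  set S := Finset.univ.filter fun i => x i ≠ 0 with hS
  have hxfeas : l1 xhat ≤ l1 x := by
    apply hopt
    have : y - A.mulVec x = w := by rw [hy]; abel
    rw [this]; exact hw
  -- sum splits
  have key : ∑ i ∈ Sᶜ, |h i| ≤ ∑ i ∈ S, |h i| := by
    have h1 : l1 x = ∑ i ∈ S, |x i| := by
      rw [l1, ← Finset.sum_filter_add_sum_filter_not Finset.univ (fun i => x i ≠ 0)]
      have : ∑ i ∈ Finset.univ.filter (fun i => ¬ x i ≠ 0), |x i| = 0 := by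
        apply Finset.sum_eq_zero
        intro i hi
        simp only [Finset.mem_filter, not_not] at hi
        simp [hi.2]
      rw [hS, this, add_zero]
    have h2 : ∑ i ∈ S, (|x i| - |h i|) + ∑ i ∈ Sᶜ, |h i| ≤ l1 xhat := by
      rw [l1, ← Finset.sum_add_sum_compl S]
      apply add_le_add
      · apply Finset.sum_le_sum
        intro i _
        have : xhat i = x i + h i := by simp [hh]
        rw [this]
        have := abs_sub_abs_le_abs_sub (x i) (-(h i))
        simpa [sub_neg_eq_add] using this
      · apply Finset.sum_le_sum
        intro i hi
        simp only [hS, Finset.mem_compl, Finset.mem_filter, Finset.mem_univ, true_and,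
          not_not] at hi
        have : xhat i = h i := by simp [hh, hi]
        rw [this]
    rw [Finset.sum_sub_distrib] at h2
    have := le_trans h2 (le_trans hxfeas (le_of_eq h1))
    linarith
  have hcone : l1 h ≤ 2 * k * linf h := by
    have hsplit : l1 h = ∑ i ∈ S, |h i| + ∑ i ∈ Sᶜ, |h i| := by
      rw [l1, ← Finset.sum_add_sum_compl S]
    have hSbound : ∑ i ∈ S, |h i| ≤ (k : ℝ) * linf h := by
      calc ∑ i ∈ S, |h i| ≤ ∑ _i ∈ S, linf h :=
            Finset.sum_le_sum fun i _ => abs_le_linf h i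
        _ = S.card * linf h := by rw [Finset.sum_const, nsmul_eq_mul]
        _ ≤ (k : ℝ) * linf h := by
            apply mul_le_mul_of_nonneg_right _ (le_of_lt hlinfpos)
            exact_mod_cast hx
    calc l1 h = ∑ i ∈ S, |h i| + ∑ i ∈ Sᶜ, |h i| := hsplit
      _ ≤ ∑ i ∈ S, |h i| + ∑ i ∈ S, |h i| := by linarith
      _ = 2 * ∑ i ∈ S, |h i| := by ring
      _ ≤ 2 * ((k : ℝ) * linf h) := by linarith
      _ = 2 * k * linf h := by ring
  -- residual bound
  have hres : l2 (A.mulVec h) ≤ 2 * ε := by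
    have : A.mulVec h = w - (y - A.mulVec xhat) := by
      rw [hy]
      have : h = xhat - x := rfl
      rw [this, Matrix.mulVec_sub]
      abel
    rw [this]
    calc l2 (w - (y - A.mulVec xhat)) ≤ l2 w + l2 (y - A.mulVec xhat) := l2_sub_le _ _
      _ ≤ ε + ε := add_le_add hw hfeas
      _ = 2 * ε := by ring
  -- omega2 ≤ ratio
  have hmem : l2 (A.mulVec h) / linf h ∈
      {r | ∃ z : Fin n → ℝ, z ≠ 0 ∧ l1 z ≤ (2 * k : ℝ) * linf z ∧
        r = l2 (A.mulVec z) / linf z} := ⟨h, hz, hcone, rfl⟩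
  have hbdd : BddBelow {r | ∃ z : Fin n → ℝ, z ≠ 0 ∧ l1 z ≤ (2 * k : ℝ) * linf z ∧
      r = l2 (A.mulVec z) / linf z} := by
    refine ⟨0, fun r hr => ?_⟩
    obtain ⟨z, hz', _, rfl⟩ := hr
    obtain ⟨j, hj⟩ := Function.ne_iff.mp hz'
    have : 0 < linf z := lt_of_lt_of_le (abs_pos.mpr hj) (abs_le_linf z j)
    exact div_nonneg (l2_nonneg _) (le_of_lt this)
  have homega : omega2 A (2 * k) ≤ l2 (A.mulVec h) / linf h := csInf_le hbdd hmem
  -- conclude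
  rw [le_div_iff₀ hω]
  have := (le_div_iff₀ hlinfpos).mp homega
  nlinarith [hres]
end

section
/- For any A ∈ ℝ^{m×n} and s ≥ 1: ω₂(A,s)² ≤ s·ω_∞(AᵀA,s), i.e., √s·√(ω_∞(AᵀA,s)) ≥ ω₂(A,s). -/
open Finset Matrix

/-- ω_∞(Q,s) = inf{ ‖Qz‖_∞/‖z‖_∞ : z ≠ 0, ‖z‖₁ ≤ s‖z‖_∞ }. -/
noncomputable def omegaInf {n : ℕ} (Q : Matrix (Fin n) (Fin n) ℝ) (s : ℝ) : ℝ :=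
  sInf {r | ∃ z : Fin n → ℝ, z ≠ 0 ∧ l1 z ≤ s * linf z ∧ r = linf (Q.mulVec z) / linf z}

lemma linf_nonneg {n : ℕ} (x : Fin n → ℝ) : 0 ≤ linf x := by
  rcases isEmpty_or_nonempty (Fin n) with h | h
  · simp [linf, Real.iSup_of_isEmpty]
  · obtain ⟨i⟩ := h
    refine le_trans (abs_nonneg (x i)) ?_
    rw [linf]
    exact le_ciSup (f := fun j => |x j|) (Set.Finite.bddAbove (Set.finite_range _)) i

lemma linf_pos {n : ℕ} (x : Fin n → ℝ) (hx : x ≠ 0) : 0 < linf x := by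
  obtain ⟨i, hi⟩ := Function.ne_iff.mp hx
  exact lt_of_lt_of_le (abs_pos.mpr hi) (abs_le_linf x i)

lemma key {m n : ℕ} (A : Matrix (Fin m) (Fin n) ℝ) (s : ℝ) (hs : 1 ≤ s)
    (z : Fin n → ℝ) (hz : z ≠ 0) (hc : l1 z ≤ s * linf z) :
    (l2 (A.mulVec z) / linf z) ^ 2 ≤ s * (linf ((Aᵀ * A).mulVec z) / linf z) := by
  have ht : 0 < linf z := linf_pos z hz
  set t := linf z
  set w := (Aᵀ * A).mulVec z with hw
  have hX : (l2 (A.mulVec z)) ^ 2 = z ⬝ᵥ w := by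
    rw [l2, Real.sq_sqrt (Finset.sum_nonneg fun j _ => sq_nonneg _)]
    rw [hw, ← Matrix.mulVec_mulVec, Matrix.dotProduct_mulVec, Matrix.vecMul_transpose]
    simp [dotProduct, sq]
  have hzw : z ⬝ᵥ w ≤ l1 z * linf w := by
    calc z ⬝ᵥ w ≤ ∑ i, |z i * w i| := by
          exact le_trans (le_abs_self _) (Finset.abs_sum_le_sum_abs _ _)
      _ ≤ ∑ i, |z i| * linf w := by
          refine Finset.sum_le_sum fun i _ => ?_
          rw [abs_mul]
          exact mul_le_mul_of_nonneg_left (abs_le_linf w i) (abs_nonneg _)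
      _ = l1 z * linf w := by rw [l1, Finset.sum_mul]
  have hY : 0 ≤ linf w := linf_nonneg w
  have hmain : (l2 (A.mulVec z)) ^ 2 ≤ s * linf w * t := by
    calc (l2 (A.mulVec z)) ^ 2 = z ⬝ᵥ w := hX
      _ ≤ l1 z * linf w := hzw
      _ ≤ (s * t) * linf w := mul_le_mul_of_nonneg_right hc hY
      _ = s * linf w * t := by ring
  rw [div_pow]
  have heq : s * (linf w / t) = (s * linf w * t) / t ^ 2 := by
    field_simp
  rw [heq]
  exact div_le_div_of_nonneg_right hmain (by positivity) |>.trans_eq rfl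

theorem stmt12 {m n : ℕ} (A : Matrix (Fin m) (Fin n) ℝ) (s : ℝ) (hs : 1 ≤ s) :
    (omega2 A s) ^ 2 ≤ s * omegaInf (Aᵀ * A) s ∧
    Real.sqrt s * Real.sqrt (omegaInf (Aᵀ * A) s) ≥ omega2 A s := by
  have hs0 : (0:ℝ) < s := lt_of_lt_of_le one_pos hs
  set S2 := {r | ∃ z : Fin n → ℝ, z ≠ 0 ∧ l1 z ≤ s * linf z ∧ r = l2 (A.mulVec z) / linf z}
  set SI := {r | ∃ z : Fin n → ℝ, z ≠ 0 ∧ l1 z ≤ s * linf z ∧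
    r = linf ((Aᵀ * A).mulVec z) / linf z}
  have hS2nonneg : ∀ r ∈ S2, (0:ℝ) ≤ r := by
    rintro r ⟨z, hz, hc, rfl⟩
    exact div_nonneg (Real.sqrt_nonneg _) (linf_nonneg z)
  have hSInonneg : ∀ r ∈ SI, (0:ℝ) ≤ r := by
    rintro r ⟨z, hz, hc, rfl⟩
    exact div_nonneg (linf_nonneg _) (linf_nonneg z)
  have ho2 : 0 ≤ omega2 A s := Real.sInf_nonneg hS2nonneg
  have hoI : 0 ≤ omegaInf (Aᵀ * A) s := Real.sInf_nonneg hSInonneg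
  have h1 : (omega2 A s) ^ 2 ≤ s * omegaInf (Aᵀ * A) s := by
    rcases Set.eq_empty_or_nonempty SI with he | hne
    · have he2 : S2 = ∅ := by
        rw [Set.eq_empty_iff_forall_notMem]
        rintro r ⟨z, hz, hc, rfl⟩
        exact Set.eq_empty_iff_forall_notMem.mp he _ ⟨z, hz, hc, rfl⟩
      have : omega2 A s = 0 := by
        rw [omega2]; rw [show {r | ∃ z : Fin n → ℝ, z ≠ 0 ∧ l1 z ≤ s * linf z ∧
          r = l2 (A.mulVec z) / linf z} = (∅ : Set ℝ) from he2]
        exact Real.sInf_empty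
      rw [this]
      simpa using mul_nonneg (le_of_lt hs0) hoI
    · rw [← div_le_iff₀' hs0]
      refine le_csInf hne ?_
      rintro r' ⟨z, hz, hc, rfl⟩
      have hr2 : l2 (A.mulVec z) / linf z ∈ S2 := ⟨z, hz, hc, rfl⟩
      have hle : omega2 A s ≤ l2 (A.mulVec z) / linf z :=
        csInf_le ⟨0, hS2nonneg⟩ hr2
      have hsq : (omega2 A s) ^ 2 ≤ (l2 (A.mulVec z) / linf z) ^ 2 :=
        pow_le_pow_left₀ ho2 hle 2
      have := key A s hs z hz hc
      rw [div_le_iff₀' hs0]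
      exact hsq.trans this
  refine ⟨h1, ?_⟩
  have : Real.sqrt ((omega2 A s) ^ 2) ≤ Real.sqrt (s * omegaInf (Aᵀ * A) s) :=
    Real.sqrt_le_sqrt h1
  rw [Real.sqrt_sq ho2] at this
  rw [ge_iff_le, ← Real.sqrt_mul (le_of_lt hs0)]
  exact this
end

section
/- Suppose for every nonzero z ∈ Ker(A) one has ‖z‖_{k,1} < (1/2)‖z‖₁. Then every k-sparse x is the unique minimizer of ‖z‖₁ subject to Az = Ax. -/
open Finset Matrix

/-- ‖x‖_{k,1}: the sum of the k largest absolute values of components of x. -/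
noncomputable def kNorm {n : ℕ} (x : Fin n → ℝ) (k : ℕ) : ℝ :=
  ⨆ S : {S : Finset (Fin n) // S.card ≤ k}, ∑ i ∈ S.1, |x i|

theorem stmt15 {m n : ℕ} (A : Matrix (Fin m) (Fin n) ℝ) (k : ℕ)
    (hNSP : ∀ z : Fin n → ℝ, z ≠ 0 → A.mulVec z = 0 → kNorm z k < (1 / 2) * l1 z)
    (x : Fin n → ℝ) (hx : (Finset.univ.filter fun i => x i ≠ 0).card ≤ k) :
    ∀ z : Fin n → ℝ, A.mulVec z = A.mulVec x → z ≠ x → l1 x < l1 z := by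
  intro z hAz hne
  set v : Fin n → ℝ := z - x with hvdef
  have hv : v ≠ 0 := sub_ne_zero.mpr hne
  have hAv : A.mulVec v = 0 := by
    rw [hvdef, mulVec_sub, hAz, sub_self]
  have hk := hNSP v hv hAv
  set S := Finset.univ.filter fun i => x i ≠ 0 with hSdef
  have hSle : ∑ i ∈ S, |v i| ≤ kNorm v k :=
    le_ciSup (f := fun T : {T : Finset (Fin n) // T.card ≤ k} => ∑ i ∈ T.1, |v i|)
      (Set.Finite.bddAbove (Set.finite_range _)) ⟨S, hx⟩
  have hsplit : l1 v = ∑ i ∈ S, |v i| + ∑ i ∈ Sᶜ, |v i| := by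
    rw [l1, ← Finset.sum_add_sum_compl S]
  have h2 : ∑ i ∈ S, |v i| < ∑ i ∈ Sᶜ, |v i| := by linarith
  have hx0 : ∀ i ∈ Sᶜ, x i = 0 := by
    intro i hi
    have := Finset.mem_compl.mp hi
    simp only [hSdef, Finset.mem_filter, Finset.mem_univ, true_and, not_not] at this
    exact this
  have h3 : l1 x ≤ ∑ i ∈ S, |v i| + ∑ i ∈ S, |z i| := by
    rw [l1, ← Finset.sum_add_sum_compl S, ← Finset.sum_add_distrib]
    have hz : ∑ i ∈ Sᶜ, |x i| = 0 :=
      Finset.sum_eq_zero fun i hi => by rw [hx0 i hi, abs_zero]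
    rw [hz, add_zero]
    refine Finset.sum_le_sum fun i _ => ?_
    have hvi : v i = z i - x i := rfl
    have := abs_sub_abs_le_abs_sub (z i) (x i)
    have h := abs_sub (z i) (v i)
    have hxz : x i = z i - v i := by rw [hvi]; ring
    rw [hxz]
    linarith [abs_sub (z i) (v i), abs_nonneg (z i), abs_nonneg (v i)]
  have h4 : l1 z = ∑ i ∈ S, |z i| + ∑ i ∈ Sᶜ, |v i| := by
    rw [l1, ← Finset.sum_add_sum_compl S]
    congr 1
    refine Finset.sum_congr rfl fun i hi => ?_
    have hvi : v i = z i - x i := rfl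
    rw [hvi, hx0 i hi, sub_zero]
  linarith
end
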